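/- The matrix S := A − A W (WᵀAW)⁻¹ Wᵀ A (equal to A Q) is symmetric positive semidefinite, and its kernel is exactly the column space of W: S x = 0 if and only if x = W c for some c ∈ ℝᵏ. -/

import Mathlib

open Matrix

/-- The matrix `S := A − A W (WᵀAW)⁻¹ Wᵀ A` (equal to `A Q`) is symmetric
positive semidefinite, and its kernel is exactly the column space of `W`:
`S x = 0` iff `x = W c` for some `c ∈ ℝᵏ`. -/
theorem deflated_matrix_posSemidef_kernel {n k : ℕ}
    (A : Matrix (Fin n) (Fin n) ℝ) (hA : A.PosDef)
    (W : Matrix (Fin n) (Fin k) ℝ)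
    (hW : LinearIndependent ℝ (fun j : Fin k => Wᵀ j)) :
    (A - A * W * (Wᵀ * A * W)⁻¹ * Wᵀ * A).PosSemidef ∧
      ∀ x : Fin n → ℝ,
        (A - A * W * (Wᵀ * A * W)⁻¹ * Wᵀ * A) *ᵥ x = 0 ↔ ∃ c : Fin k → ℝ, x = W *ᵥ c := by
  have hconj : ∀ {a b : ℕ} (M : Matrix (Fin a) (Fin b) ℝ), Mᴴ = Mᵀ := by
    intro a b M; ext i j; simp [Matrix.conjTranspose_apply]
  have hWinj : Function.Injective W.mulVec := Matrix.mulVec_injective_iff.mpr hW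
  set E : Matrix (Fin k) (Fin k) ℝ := Wᵀ * A * W with hEdef
  have hAsym : Aᵀ = A := hA.isHermitian
  -- E is positive definite
  have hE : E.PosDef := by
    refine Matrix.PosDef.of_dotProduct_mulVec_pos ?_ (fun x hx => ?_)
    · have := Matrix.isHermitian_conjTranspose_mul_mul W hA.1
      rw [hconj W] at this
      exact this
    · have hWx : W *ᵥ x ≠ 0 := fun h => hx (hWinj (h.trans (Matrix.mulVec_zero W).symm))
      have h1 := hA.dotProduct_mulVec_pos hWx
      rw [hEdef, ← hconj W]
      simpa only [star_mulVec, Matrix.dotProduct_mulVec, Matrix.vecMul_vecMul] using h1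
  have hEunit : IsUnit E := hE.isUnit
  have hEdetu : IsUnit E.det := (Matrix.isUnit_iff_isUnit_det E).mp hEunit
  have hEinv_mul : E⁻¹ * E = 1 := Matrix.nonsing_inv_mul E hEdetu
  have hEinvsym : (E⁻¹)ᵀ = E⁻¹ := hE.inv.isHermitian
  set B : Matrix (Fin n) (Fin n) ℝ := W * E⁻¹ * Wᵀ with hBdef
  have hBsym : Bᵀ = B := by
    rw [hBdef]
    simp [Matrix.transpose_mul, hEinvsym, Matrix.mul_assoc]
  have hBAB : B * A * B = B := by
    calc B * A * B = W * (E⁻¹ * (Wᵀ * A * W) * E⁻¹) * Wᵀ := by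
          simp only [hBdef, Matrix.mul_assoc]
      _ = B := by rw [← hEdef, hEinv_mul, Matrix.one_mul]
  set S : Matrix (Fin n) (Fin n) ℝ := A - A * W * (Wᵀ * A * W)⁻¹ * Wᵀ * A with hSdef
  have hSB : S = A - A * B * A := by
    rw [hSdef, hBdef, ← hEdef]; simp only [Matrix.mul_assoc]
  set Q : Matrix (Fin n) (Fin n) ℝ := 1 - B * A with hQdef
  have hQT : Qᵀ = 1 - A * B := by
    rw [hQdef, Matrix.transpose_sub, Matrix.transpose_one, Matrix.transpose_mul, hBsym, hAsym]
  have h2 : B * (A * (B * A)) = B * A := by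
    rw [← Matrix.mul_assoc, ← Matrix.mul_assoc, hBAB]
  have hSQ : S = Qᵀ * A * Q := by
    rw [hQT, hQdef, hSB]
    simp only [Matrix.sub_mul, Matrix.mul_sub, Matrix.one_mul, Matrix.mul_one,
      Matrix.mul_assoc, h2]
    abel
  have hQconj : Qᴴ = Qᵀ := hconj Q
  have hSpsd : S.PosSemidef := by
    rw [hSQ, ← hQconj]
    exact hA.posSemidef.conjTranspose_mul_mul_same Q
  refine ⟨hSpsd, fun x => ⟨fun hx => ?_, fun ⟨c, hc⟩ => ?_⟩⟩
  · -- forward: S x = 0 → x in column space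
    have e1 : star x ⬝ᵥ (S *ᵥ x) = star (Q *ᵥ x) ⬝ᵥ (A *ᵥ (Q *ᵥ x)) := by
      rw [hSQ, ← hQconj]
      simp only [star_mulVec, Matrix.dotProduct_mulVec, Matrix.vecMul_vecMul]
    have hdot : star (Q *ᵥ x) ⬝ᵥ (A *ᵥ (Q *ᵥ x)) = 0 := by
      rw [← e1, hx]; simp
    have hQx : Q *ᵥ x = 0 := by
      by_contra h
      exact (hA.dotProduct_mulVec_pos h).ne' hdot
    have hsub : x - (B * A) *ᵥ x = 0 := by
      rw [hQdef] at hQx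
      simpa [Matrix.sub_mulVec] using hQx
    have hx' : x = (B * A) *ᵥ x := sub_eq_zero.mp hsub
    refine ⟨(E⁻¹ * Wᵀ * A) *ᵥ x, ?_⟩
    have h4 : W * (E⁻¹ * Wᵀ * A) = B * A := by
      rw [hBdef]; simp only [Matrix.mul_assoc]
    rw [Matrix.mulVec_mulVec, h4]
    exact hx'
  · -- backward: S (W c) = 0
    have hSW : S * W = 0 := by
      rw [hSB, Matrix.sub_mul]
      have h3 : A * B * A * W = A * W := by
        calc A * B * A * W = A * (W * (E⁻¹ * E)) := by
              simp only [hBdef, hEdef, Matrix.mul_assoc]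
          _ = A * W := by rw [hEinv_mul, Matrix.mul_one]
      rw [h3, sub_self]
    rw [hc, Matrix.mulVec_mulVec, hSW, Matrix.zero_mulVec]
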